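/- Let γ_n : S¹ → ℙ (n ∈ ℕ) be closed curves in the punctured sphere ℙ, each nullhomotopic in ℙ, and suppose γ_n converges uniformly (with respect to the Euclidean metric of ℝ³) to a continuous map γ : S¹ → ℙ. Then γ is nullhomotopic in ℙ. -/

import Mathlib

open Real ContinuousMap

noncomputable section

abbrev E3 := EuclideanSpace ℝ (Fin 3)

def sphere2 : Set E3 := Metric.sphere 0 1

def eqPt (θ : ℝ) : E3 := (WithLp.equiv 2 _).symm ![Real.cos θ, Real.sin θ, 0]

lemma eqPt_mem_sphere2 (θ : ℝ) : eqPt θ ∈ sphere2 := by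
  simp only [sphere2, mem_sphere_iff_norm, sub_zero, eqPt]
  rw [EuclideanSpace.norm_eq]
  simp [Fin.sum_univ_three, WithLp.equiv_symm_apply, PiLp.toLp_apply]

def puncture (k : ℕ) (j : Fin k) : E3 := eqPt (2 * π * j / k)

def Pset (k : ℕ) : Set E3 := sphere2 \ Set.range (puncture k)

abbrev PSub (k : ℕ) := ↥(Pset k)

def equatorSet (k : ℕ) : Set E3 := {x ∈ Pset k | x 2 = 0}

def arcSide (k : ℕ) (j : Fin k) : Set E3 :=
  {x | ∃ θ : ℝ, 2 * π * j / k < θ ∧ θ < 2 * π * (j + 1) / k ∧ x = eqPt θ}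

def hemi : Bool → Set E3
  | true => {x | 0 < x 2}
  | false => {x | x 2 < 0}

structure IsNice (k : ℕ) (γ : C(Circle, PSub k)) (m : ℕ) (t : ℕ → ℝ) (σ : ℕ → Fin k) : Prop where
  m_pos : 1 ≤ m
  mono : StrictMono t
  t_periodic : ∀ i, t (i + 2 * m) = t i + 2 * π
  σ_periodic : ∀ i, σ (i + 2 * m) = σ i
  preimage : ∀ z : Circle, ((γ z : E3) ∈ equatorSet k) ↔ ∃ i, z = Circle.exp (t i)
  code : ∀ i, ((γ (Circle.exp (t i)) : PSub k) : E3) ∈ arcSide k (σ i)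
  adjacent : ∀ i, σ i ≠ σ (i + 1)
  alternate : ∃ b : Bool, ∀ i s, t i < s → s < t (i + 1) →
      ((γ (Circle.exp s) : PSub k) : E3) ∈ hemi (if Even i then b else !b)

def IsNullCurve {k : ℕ} (γ : C(Circle, PSub k)) : Prop :=
  ∃ x, γ.Homotopic (ContinuousMap.const Circle x)

def NullLoop {X : Type*} [TopologicalSpace X] {x : X} (p : Path x x) : Prop :=
  p.Homotopic (Path.refl x)

def arcPath {X : Type*} [TopologicalSpace X] (δ : C(Circle, X)) (a b : ℝ) :
    Path (δ (Circle.exp a)) (δ (Circle.exp b)) where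
  toFun u := δ (Circle.exp (a + u * (b - a)))
  continuous_toFun := by fun_prop
  source' := by simp
  target' := by
    have h : a + (1 : ℝ) * (b - a) = b := by ring
    simp [h]

def AdmissibleWith (k m : ℕ) (t : ℕ → ℝ) (σ : ℕ → Fin k)
    (γ δ : C(Circle, PSub k)) (s s' : ℕ → ℝ) : Prop :=
  (∀ i, s i ≤ s' i) ∧
  (∀ i, s' i < s (i + 1)) ∧
  (∀ i, s (i + 2 * m) = s i + 2 * π) ∧
  (∀ i, s' (i + 2 * m) = s' i + 2 * π) ∧
  (∀ i, ((δ (Circle.exp (s i)) : PSub k) : E3) ∈ arcSide k (σ i) ∧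
        ((δ (Circle.exp (s' i)) : PSub k) : E3) ∈ arcSide k (σ i)) ∧
  (∀ i, ∃ q : Path (δ (Circle.exp (s' i))) (δ (Circle.exp (s i))),
      (∀ u, ((q u : PSub k) : E3) ∈ arcSide k (σ i)) ∧
      NullLoop ((arcPath δ (s i) (s' i)).trans q)) ∧
  (∀ i, ∃ q₁ : Path (γ (Circle.exp (t (i + 1)))) (δ (Circle.exp (s (i + 1)))),
        ∃ q₂ : Path (δ (Circle.exp (s' i))) (γ (Circle.exp (t i))),
      (∀ u, ((q₁ u : PSub k) : E3) ∈ arcSide k (σ (i + 1))) ∧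
      (∀ u, ((q₂ u : PSub k) : E3) ∈ arcSide k (σ i)) ∧
      NullLoop ((arcPath γ (t i) (t (i + 1))).trans
        (q₁.trans (((arcPath δ (s' i) (s (i + 1))).symm).trans q₂))))

def Admissible (k m : ℕ) (t : ℕ → ℝ) (σ : ℕ → Fin k) (γ δ : C(Circle, PSub k)) : Prop :=
  ∃ s s' : ℕ → ℝ, AdmissibleWith k m t σ γ δ s s'


/-- A uniform limit (in the Euclidean metric of `ℝ³`) of nullhomotopic closed curves in
the punctured sphere is nullhomotopic. -/
theorem stmt8 (k : ℕ) (hk : 3 ≤ k) (γs : ℕ → C(Circle, PSub k)) (γ : C(Circle, PSub k))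
    (hnull : ∀ n, IsNullCurve (γs n))
    (hconv : TendstoUniformly (fun n z => ((γs n z : PSub k) : E3))
      (fun z => ((γ z : PSub k) : E3)) Filter.atTop) :
    IsNullCurve γ := by

  -- distance from the image of γ to the (finite, closed) puncture set is positive
  have hfin : (Set.range (puncture k)).Finite := Set.finite_range _
  have hclosed : IsClosed (Set.range (puncture k)) := hfin.isClosed
  have hcont : Continuous fun z : Circle => Metric.infDist ((γ z : E3)) (Set.range (puncture k)) :=
    (Metric.continuous_infDist_pt _).comp ((map_continuous γ).subtype_val)
  obtain ⟨z₀, -, hz₀⟩ := IsCompact.exists_isMinOn (isCompact_univ)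
    ⟨Circle.exp 0, trivial⟩ hcont.continuousOn
  set r : ℝ := Metric.infDist ((γ z₀ : E3)) (Set.range (puncture k)) with hr
  have hrpos : 0 < r := by
    rw [hr]
    rcases eq_or_ne k 0 with hk0 | hk0
    · omega
    have hne : (Set.range (puncture k)).Nonempty := ⟨puncture k ⟨0, Nat.pos_of_ne_zero hk0⟩,
      Set.mem_range_self _⟩
    exact (hclosed.notMem_iff_infDist_pos hne).mp (γ z₀).2.2
  have hrle : ∀ (z : Circle) (j : Fin k), r ≤ dist ((γ z : E3)) (puncture k j) := by
    intro z j
    calc r ≤ Metric.infDist ((γ z : E3)) (Set.range (puncture k)) := hz₀ (Set.mem_univ z)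
      _ ≤ dist ((γ z : E3)) (puncture k j) := Metric.infDist_le_dist_of_mem (Set.mem_range_self _)
  -- choose n with uniform distance < ε
  set ε : ℝ := min (r / 2) (1 / 2) with hε
  have hεpos : 0 < ε := lt_min (by linarith) (by norm_num)
  have := (Metric.tendstoUniformly_iff).mp hconv ε hεpos
  obtain ⟨n, hn⟩ := this.exists
  -- build a homotopy from γ to γs n
  have hd : ∀ z : Circle, dist ((γ z : E3)) ((γs n z : E3)) < ε := hn
  have hnorm1 : ∀ z : Circle, ‖(γ z : E3)‖ = 1 := by
    intro z
    have := (γ z).2.1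
    simpa [sphere2, mem_sphere_iff_norm] using this
  -- the interpolation map
  set f : unitInterval × Circle → E3 := fun p =>
    (γ p.2 : E3) + (p.1 : ℝ) • ((γs n p.2 : E3) - (γ p.2 : E3)) with hf
  have hfd : ∀ p : unitInterval × Circle, dist (f p) ((γ p.2 : E3)) < ε := by
    intro p
    have h1 : dist (f p) ((γ p.2 : E3)) = (p.1 : ℝ) * ‖(γs n p.2 : E3) - (γ p.2 : E3)‖ := by
      simp only [hf, dist_eq_norm, add_sub_cancel_left, norm_smul, Real.norm_eq_abs,
        abs_of_nonneg p.1.2.1]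
    rw [h1]
    calc (p.1 : ℝ) * ‖(γs n p.2 : E3) - (γ p.2 : E3)‖
        ≤ 1 * ‖(γs n p.2 : E3) - (γ p.2 : E3)‖ := by
          apply mul_le_mul_of_nonneg_right p.1.2.2 (norm_nonneg _)
      _ = dist ((γ p.2 : E3)) ((γs n p.2 : E3)) := by rw [one_mul, dist_eq_norm, norm_sub_rev]
      _ < ε := hd p.2
  have hfnorm : ∀ p : unitInterval × Circle, (1 : ℝ) - ε ≤ ‖f p‖ ∧ ‖f p‖ ≤ 1 + ε := by
    intro p
    have h1 := hfd p
    rw [dist_eq_norm] at h1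
    have h2 := hnorm1 p.2
    constructor
    · have h3 := abs_norm_sub_norm_le (f p) ((γ p.2 : E3))
      rw [h2] at h3
      have h4 := abs_le.mp (h3.trans h1.le)
      linarith [h4.1]
    · calc ‖f p‖ ≤ ‖(γ p.2 : E3)‖ + ‖f p - (γ p.2 : E3)‖ := by
            simpa using norm_add_le ((γ p.2 : E3)) (f p - (γ p.2 : E3))
        _ ≤ 1 + ε := by rw [h2]; linarith
  have hεhalf : ε ≤ 1 / 2 := min_le_right _ _
  have hfne : ∀ p : unitInterval × Circle, ‖f p‖ ≠ 0 := by
    intro p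
    have := (hfnorm p).1
    intro h
    rw [h] at this
    linarith
  -- the normalized map
  set g : unitInterval × Circle → E3 := fun p => ‖f p‖⁻¹ • f p with hg
  have hgsphere : ∀ p, g p ∈ sphere2 := by
    intro p
    simp only [sphere2, mem_sphere_iff_norm, sub_zero, hg, norm_smul, norm_inv, norm_norm]
    exact inv_mul_cancel₀ (hfne p)
  have hgclose : ∀ p : unitInterval × Circle, dist (g p) ((γ p.2 : E3)) < 2 * ε := by
    intro p
    have h1 := hfd p
    have h2 := hfnorm p
    have h3 : dist (g p) (f p) = |1 - ‖f p‖| := by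
      rw [dist_eq_norm, hg]
      have : ‖f p‖⁻¹ • f p - f p = (‖f p‖⁻¹ - 1) • f p := by
        rw [sub_smul, one_smul]
      rw [this, norm_smul, Real.norm_eq_abs]
      rw [abs_sub_comm]
      have hpos : (0:ℝ) < ‖f p‖ := lt_of_lt_of_le (by linarith) h2.1
      rw [show (1 : ℝ) - ‖f p‖⁻¹ = (‖f p‖ - 1) / ‖f p‖ by field_simp, abs_div,
        abs_of_pos hpos]
      field_simp [abs_sub_comm]
      exact abs_sub_comm _ _
    have h4 : |1 - ‖f p‖| ≤ ε := by
      rw [abs_le]; constructor <;> [linarith [h2.2]; linarith [h2.1]]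
    calc dist (g p) ((γ p.2 : E3)) ≤ dist (g p) (f p) + dist (f p) ((γ p.2 : E3)) :=
          dist_triangle _ _ _
      _ < ε + ε := by rw [h3]; exact add_lt_add_of_le_of_lt h4 h1
      _ = 2 * ε := by ring
  have hgmem : ∀ p, g p ∈ Pset k := by
    intro p
    refine ⟨hgsphere p, ?_⟩
    rintro ⟨j, hj⟩
    have h1 := hrle p.2 j
    have h2 := hgclose p
    rw [← hj] at h2
    rw [dist_comm] at h2
    have hεr : 2 * ε ≤ r := by
      have := min_le_left (r / 2) (1 / 2)
      rw [← hε] at this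
      linarith
    linarith
  have hfcont : Continuous f := by
    apply Continuous.add
    · exact (map_continuous γ).subtype_val.comp continuous_snd
    · exact (continuous_subtype_val.comp continuous_fst).smul
        (((map_continuous (γs n)).subtype_val.comp continuous_snd).sub
          ((map_continuous γ).subtype_val.comp continuous_snd))
  have hgcont : Continuous g := by
    exact ((hfcont.norm.inv₀ hfne)).smul hfcont
  -- the homotopy
  have H : γ.Homotopic (γs n) := by
    refine ⟨{
      toFun := fun p => ⟨g p, hgmem p⟩
      continuous_toFun := hgcont.subtype_mk _
      map_zero_left := ?_
      map_one_left := ?_ }⟩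
    · intro z
      ext
      simp only [hg, hf]
      norm_num [hnorm1 z]
    · intro z
      ext
      simp only [hg, hf]
      have h1 : ((1 : unitInterval) : ℝ) = 1 := rfl
      have hn1 : ‖(γs n z : E3)‖ = 1 := by
        have := (γs n z).2.1
        simpa [sphere2, mem_sphere_iff_norm] using this
      simp [h1, hn1]
  obtain ⟨x, hx⟩ := hnull n
  exact ⟨x, H.trans hx⟩
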